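/- With hypotheses as in the orthogonal decomposition setting (O an order in B = F, a CM field, or a totally definite quaternion algebra over a totally real field F; f a totally positive Hermitian form on V = B^n), every O-lattice L ⊆ V admits an orthogonal decomposition L = L_1 ⊥ ⋯ ⊥ L_r into indecomposable O-sublattices, and the multiset {L_1, …, L_r} is uniquely determined by L. -/

import Mathlib

/-- Auxiliary: a common denominator for finitely many rationals, in a pairwise form. -/
theorem unique_orthogonal_decomposition.aux_denom {α : Type*} (s : Finset α) (q : α → α → ℚ) :
    ∃ d : ℕ, 0 < d ∧ ∀ a ∈ s, ∀ b ∈ s, ∃ m : ℤ, q a b * (d : ℚ) = (m : ℚ) := by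
  classical
  refine ⟨∏ pr ∈ s ×ˢ s, (q pr.1 pr.2).den,
    Finset.prod_pos (fun pr _ => (q pr.1 pr.2).den_pos), ?_⟩
  intro a ha b hb
  obtain ⟨k, hk⟩ := Finset.dvd_prod_of_mem (fun pr => (q pr.1 pr.2).den)
    (Finset.mem_product (p := (a, b)) |>.mpr ⟨ha, hb⟩)
  exact ⟨(q a b).num * k, by
    rw [hk]; push_cast; rw [← mul_assoc, Rat.mul_den_eq_num]⟩
set_option maxHeartbeats 1000000 in

/-- In the setting of the paper (`O` an order in `B = F`, a CM field, or a totally definite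
quaternion algebra over a totally real field `F`; `f` a totally positive Hermitian form on
`V = Bⁿ`), every `O`-lattice `L ⊆ V` admits an orthogonal decomposition
`L = L₁ ⊥ ⋯ ⊥ L_r` into indecomposable `O`-sublattices, and the set `{L₁, …, L_r}` is
uniquely determined by `L`. -/
theorem unique_orthogonal_decomposition
    (F : Type*) [Field F] [NumberField F]
    (htotreal : ∀ φ : F →+* ℂ, ∀ x : F, (φ x).im = 0)
    (B : Type*) [Ring B] [StarRing B] [Algebra F B]
    (hstarF : ∀ a : F, star (algebraMap F B a) = algebraMap F B a)
    (hcase :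
      Nonempty (B ≃ₐ[F] F) ∨
      ((∀ x y : B, x * y = y * x) ∧ IsField B ∧ Module.finrank F B = 2 ∧
        ∀ φ : B →+* ℂ, ∃ x : B, (φ x).im ≠ 0) ∨
      (∃ a b : F, Nonempty (B ≃ₐ[F] QuaternionAlgebra F a 0 b) ∧
        ∀ σ : F →+* ℝ, σ a < 0 ∧ σ b < 0))
    (O : Subring B)
    (hOfg : ∃ s : Finset B, (s : Set B) ⊆ (O : Set B) ∧
      ∀ b ∈ O, b ∈ Submodule.span ℤ (s : Set B))
    (hOfull : ∀ b : B, ∃ m : ℤ, m ≠ 0 ∧ (m : B) * b ∈ O)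
    (n : ℕ) (f : (Fin n → B) → (Fin n → B) → B)
    (hf_add : ∀ x₁ x₂ y : Fin n → B, f (x₁ + x₂) y = f x₁ y + f x₂ y)
    (hf_smul : ∀ (a : B) (x y : Fin n → B), f (a • x) y = a * f x y)
    (hf_conj : ∀ x y : Fin n → B, f y x = star (f x y))
    (hf_pos : ∀ x : Fin n → B, x ≠ 0 → ∃ c : F,
      f x x = algebraMap F B c ∧ ∀ σ : F →+* ℝ, 0 < σ c)
    (L : Submodule ℤ (Fin n → B)) (hL : L ≠ ⊥) (hLfg : L.FG)
    (hLfull : ∀ v : Fin n → B, ∃ m : ℤ, m ≠ 0 ∧ m • v ∈ L)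
    (hLO : ∀ a ∈ O, ∀ x ∈ L, a • x ∈ L) :
    ∃! S : Finset (Submodule ℤ (Fin n → B)),
      (∀ M ∈ S, M ≠ ⊥ ∧ M ≤ L ∧ (∀ a ∈ O, ∀ x ∈ M, a • x ∈ M) ∧
        -- `M` is indecomposable
        (∀ M₁ M₂ : Submodule ℤ (Fin n → B),
          (∀ a ∈ O, ∀ x ∈ M₁, a • x ∈ M₁) → (∀ a ∈ O, ∀ x ∈ M₂, a • x ∈ M₂) →
          M₁ ⊔ M₂ = M → (∀ x ∈ M₁, ∀ y ∈ M₂, f x y = 0) → M₁ = ⊥ ∨ M₂ = ⊥)) ∧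
      -- the summands are pairwise orthogonal
      (∀ M ∈ S, ∀ N ∈ S, M ≠ N → ∀ x ∈ M, ∀ y ∈ N, f x y = 0) ∧
      -- and their (orthogonal) sum is `L`
      S.sup id = L := by
  classical
  -- ## Basic setup
  have hBnt : Nontrivial B := by
    rcases hcase with ⟨⟨e⟩⟩ | ⟨-, hfld, -, -⟩ | ⟨a, b, ⟨e⟩, -⟩
    · exact ⟨1, 0, fun h => one_ne_zero (α := F) (by simpa using congrArg e h)⟩
    · obtain ⟨x, y, hxy⟩ := hfld.exists_pair_ne; exact ⟨x, y, hxy⟩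
    · exact ⟨1, 0, fun h => one_ne_zero (α := QuaternionAlgebra F a 0 b)
        (by simpa using congrArg e h)⟩
  have hAinj : Function.Injective (algebraMap F B) := RingHom.injective _
  -- ## basic properties of f
  have hf01 : ∀ y, f 0 y = 0 := by
    intro y
    have h := hf_add 0 0 y
    rw [add_zero] at h
    exact (add_eq_right.mp h.symm)
  have hf_add2 : ∀ x y₁ y₂ : Fin n → B, f x (y₁ + y₂) = f x y₁ + f x y₂ := by
    intro x y₁ y₂
    rw [hf_conj y₁ x, hf_conj y₂ x, hf_conj (y₁ + y₂) x, hf_add, star_add]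
  have hf02 : ∀ x, f x 0 = 0 := by
    intro x; rw [hf_conj 0 x, hf01, star_zero]
  have horthsymm : ∀ x y : Fin n → B, f x y = 0 → f y x = 0 := by
    intro x y h; rw [hf_conj x y, h, star_zero]
  have hfz1 : ∀ (m : ℤ) (x y : Fin n → B), f (m • x) y = m • f x y := by
    intro m x y
    exact map_zsmul (AddMonoidHom.mk' (fun x => f x y) (fun a b => hf_add a b y)) m x
  have hfz2 : ∀ (x : Fin n → B) (m : ℤ) (y : Fin n → B), f x (m • y) = m • f x y := by
    intro x m y
    exact map_zsmul (AddMonoidHom.mk' (f x) (hf_add2 x)) m y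
  have hfsum2 : ∀ (x : Fin n → B) (s : Finset (Submodule ℤ (Fin n → B)))
      (g : Submodule ℤ (Fin n → B) → (Fin n → B)),
      f x (∑ N ∈ s, g N) = ∑ N ∈ s, f x (g N) := by
    intro x s g
    exact map_sum (AddMonoidHom.mk' (f x) (hf_add2 x)) g s
  have hsmul0 : ∀ a : B, a • (0 : Fin n → B) = 0 := by
    intro a; funext i; simp
  have hsmuladd : ∀ (a : B) (u v : Fin n → B), a • (u + v) = a • u + a • v := by
    intro a u v; funext i; simp [mul_add]
  have hsmulcomm : ∀ (a : B) (m : ℤ) (u : Fin n → B), a • m • u = m • a • u := by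
    intro a m u; funext i
    simp only [Pi.smul_apply, smul_eq_mul, zsmul_eq_mul, Pi.mul_apply, Pi.intCast_apply]
    rw [← mul_assoc, ← (Int.cast_commute m a).eq, mul_assoc]
  have hsmulsum : ∀ (a : B) (s : Finset (Submodule ℤ (Fin n → B)))
      (g : Submodule ℤ (Fin n → B) → (Fin n → B)),
      a • (∑ N ∈ s, g N) = ∑ N ∈ s, a • g N := by
    intro a s g
    exact map_sum (AddMonoidHom.mk' (fun v => a • v) (hsmuladd a)) g s
  -- ## real embeddings
  have mkre : ∀ φ : F →+* ℂ, ∃ σ : F →+* ℝ, ∀ z : F, (σ z : ℝ) = (φ z).re := by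
    intro φ
    refine ⟨{ toFun := fun z => (φ z).re,
              map_one' := by simp,
              map_mul' := ?_,
              map_zero' := by simp,
              map_add' := by intro a b; simp }, fun z => rfl⟩
    intro a b
    simp [Complex.mul_re, htotreal φ]
  have hembA : Nonempty (F →ₐ[ℚ] ℂ) := by
    have : Nonempty (F →+* ℂ) := by
      have hcard := NumberField.Embeddings.card F ℂ
      have h0 : 0 < Module.finrank ℚ F := Module.finrank_pos
      rw [← hcard] at h0
      exact Fintype.card_pos_iff.mp h0
    exact ⟨this.some.toRatAlgHom⟩
  -- ## the F-valued norm c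
  have hfxx : ∀ x : Fin n → B, ∃ cc : F, f x x = algebraMap F B cc := by
    intro x
    by_cases hx : x = 0
    · exact ⟨0, by rw [hx, hf01 0, map_zero]⟩
    · obtain ⟨cc, h1, -⟩ := hf_pos x hx; exact ⟨cc, h1⟩
  choose c hc using hfxx
  have hc0 : c 0 = 0 := hAinj (by rw [← hc 0, hf01 0, map_zero])
  have hcpos : ∀ x : Fin n → B, x ≠ 0 → ∀ σ : F →+* ℝ, 0 < σ (c x) := by
    intro x hx
    obtain ⟨c', h1, h2⟩ := hf_pos x hx
    have hcx : c x = c' := hAinj (by rw [← hc x, h1])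
    rw [hcx]; exact h2
  -- ## the rational quadratic form Q
  set Q : (Fin n → B) → ℚ := fun x => Algebra.trace ℚ F (c x) with hQdef
  have hQc : ∀ x, Q x = Algebra.trace ℚ F (c x) := fun x => rfl
  have hQpos : ∀ x : Fin n → B, x ≠ 0 → 0 < Q x := by
    intro x hx
    have h2' := hcpos x hx
    have htr : (algebraMap ℚ ℂ) (Algebra.trace ℚ F (c x)) = ∑ σ : F →ₐ[ℚ] ℂ, σ (c x) :=
      trace_eq_sum_embeddings ℂ
    have hpos : 0 < ((algebraMap ℚ ℂ) (Algebra.trace ℚ F (c x))).re := by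
      rw [htr, Complex.re_sum]
      haveI := hembA
      apply Finset.sum_pos
      · intro φ _
        obtain ⟨σ, hσ⟩ := mkre φ.toRingHom
        have h3 := h2' σ
        rw [hσ (c x)] at h3
        exact h3
      · exact Finset.univ_nonempty
    rw [hQc]
    simpa using hpos
  have hdef : ∀ x : Fin n → B, f x x = 0 → x = 0 := by
    intro x h
    by_contra hx
    have hcx : c x = 0 := hAinj (by rw [← hc x, h, map_zero])
    have := hQpos x hx
    rw [hQc, hcx, map_zero] at this
    exact lt_irrefl 0 this
  have hQadd : ∀ u v : Fin n → B, f u v = 0 → Q (u + v) = Q u + Q v := by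
    intro u v h
    have e1 : f (u + v) (u + v) = f u u + f v v := by
      rw [hf_add, hf_add2, hf_add2, h, horthsymm u v h, add_zero, zero_add]
    have e2 : c (u + v) = c u + c v := by
      apply hAinj
      rw [map_add, ← hc (u + v), ← hc u, ← hc v]
      exact e1
    rw [hQc, hQc, hQc, e2, map_add]
  -- ## the polar form and discreteness
  set cp : (Fin n → B) → (Fin n → B) → F := fun u v => c (u + v) - c u - c v with hcpdef
  have hcpA : ∀ u v, algebraMap F B (cp u v) = f u v + f v u := by
    intro u v
    simp only [hcpdef]
    rw [map_sub, map_sub, ← hc (u + v), ← hc u, ← hc v, hf_add, hf_add2, hf_add2]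
    abel
  have hcp_add1 : ∀ u₁ u₂ v, cp (u₁ + u₂) v = cp u₁ v + cp u₂ v := by
    intro u₁ u₂ v
    apply hAinj
    rw [map_add, hcpA, hcpA, hcpA, hf_add, hf_add2]
    abel
  have hcp_z1 : ∀ (m : ℤ) u v, cp (m • u) v = m • cp u v := by
    intro m u v
    apply hAinj
    rw [map_zsmul, hcpA, hcpA, hfz1, hfz2, smul_add]
  have hcp_symm : ∀ u v, cp u v = cp v u := by
    intro u v
    simp only [hcpdef]
    rw [add_comm u v]
    ring
  have hcp0 : ∀ u, cp u 0 = 0 := by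
    intro u
    simp only [hcpdef]
    rw [add_zero, hc0]
    ring
  set pQ : (Fin n → B) → (Fin n → B) → ℚ := fun u v => Algebra.trace ℚ F (cp u v) with hpQdef
  have hpQc : ∀ u v, pQ u v = Algebra.trace ℚ F (cp u v) := fun u v => rfl
  have hpQ_add1 : ∀ u₁ u₂ v, pQ (u₁ + u₂) v = pQ u₁ v + pQ u₂ v := by
    intro u₁ u₂ v; rw [hpQc, hpQc, hpQc, hcp_add1, map_add]
  have hpQ_z1 : ∀ (m : ℤ) u v, pQ (m • u) v = m • pQ u v := by
    intro m u v; rw [hpQc, hpQc, hcp_z1, map_zsmul]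
  have hpQ_symm : ∀ u v, pQ u v = pQ v u := by
    intro u v; rw [hpQc, hpQc, hcp_symm]
  have hpQ0 : ∀ u, pQ u 0 = 0 := by
    intro u; rw [hpQc, hcp0, map_zero]
  have hpQ_add2 : ∀ u v₁ v₂, pQ u (v₁ + v₂) = pQ u v₁ + pQ u v₂ := by
    intro u v₁ v₂; rw [hpQ_symm, hpQ_add1, hpQ_symm v₁ u, hpQ_symm v₂ u]
  have hpQ_z2 : ∀ u (m : ℤ) v, pQ u (m • v) = m • pQ u v := by
    intro u m v; rw [hpQ_symm, hpQ_z1, hpQ_symm v u]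
  have hpQ02 : ∀ u, pQ 0 u = 0 := by
    intro u; rw [hpQ_symm, hpQ0]
  have hpQ_diag : ∀ x, pQ x x = Q x + Q x := by
    intro x
    have : cp x x = c x + c x := by
      apply hAinj
      rw [hcpA, map_add, ← hc x]
    rw [hpQc, this, map_add, hQc]
  obtain ⟨G, hG⟩ := hLfg
  obtain ⟨d₀, hd₀pos, hd₀⟩ := unique_orthogonal_decomposition.aux_denom G (fun g g' => pQ g g')
  have hHgen : ∀ g ∈ G, ∀ g' ∈ G, ∃ m : ℤ, pQ g g' * (d₀ : ℚ) = (m : ℚ) := hd₀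
  have hpH : ∀ x, x ∈ L → ∀ y, y ∈ L → ∃ m : ℤ, pQ x y * (d₀ : ℚ) = (m : ℚ) := by
    have inner : ∀ g ∈ G, ∀ y, y ∈ L → ∃ m : ℤ, pQ g y * (d₀ : ℚ) = (m : ℚ) := by
      intro g hg y hy
      rw [← hG] at hy
      refine Submodule.span_induction
        (p := fun y _ => ∃ m : ℤ, pQ g y * (d₀ : ℚ) = (m : ℚ)) ?_ ?_ ?_ ?_ hy
      · intro y' hy'; exact hHgen g hg y' hy'
      · exact ⟨0, by rw [hpQ0]; simp⟩
      · rintro u v - - ⟨m1, h1⟩ ⟨m2, h2⟩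
        refine ⟨m1 + m2, ?_⟩
        rw [hpQ_add2, add_mul, h1, h2]
        push_cast; ring
      · rintro m u - ⟨k, hk⟩
        refine ⟨m * k, ?_⟩
        rw [hpQ_z2, zsmul_eq_mul, mul_assoc, hk]
        push_cast; ring
    intro x hx
    rw [← hG] at hx
    refine Submodule.span_induction
      (p := fun x _ => ∀ y, y ∈ L → ∃ m : ℤ, pQ x y * (d₀ : ℚ) = (m : ℚ)) ?_ ?_ ?_ ?_ hx
    · intro g hg y hy; exact inner g hg y hy
    · intro y hy; exact ⟨0, by rw [hpQ02]; simp⟩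
    · rintro u v - - hu hv y hy
      obtain ⟨m1, h1⟩ := hu y hy; obtain ⟨m2, h2⟩ := hv y hy
      refine ⟨m1 + m2, ?_⟩
      rw [hpQ_add1, add_mul, h1, h2]
      push_cast; ring
    · rintro m u - hu y hy
      obtain ⟨k, hk⟩ := hu y hy
      refine ⟨m * k, ?_⟩
      rw [hpQ_z1, zsmul_eq_mul, mul_assoc, hk]
      push_cast; ring
  have hQint : ∀ x, x ∈ L → ∃ m : ℤ, Q x * ((2 * d₀ : ℕ) : ℚ) = (m : ℚ) := by
    intro x hx
    obtain ⟨m, hm⟩ := hpH x hx x hx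
    rw [hpQ_diag] at hm
    refine ⟨m, ?_⟩
    push_cast at hm ⊢
    linarith
  -- ## indecomposable vectors
  set W : Set (Fin n → B) := {y | y ∈ L ∧ y ≠ 0 ∧ ∀ u v : Fin n → B,
    u ∈ L → v ∈ L → u + v = y → f u v = 0 → u = 0 ∨ v = 0} with hWdef
  have hWL : ∀ y ∈ W, y ∈ L := by intro y hy; rw [hWdef] at hy; exact hy.1
  have hW0 : ∀ y ∈ W, y ≠ 0 := by intro y hy; rw [hWdef] at hy; exact hy.2.1
  have hWind : ∀ y ∈ W, ∀ u v : Fin n → B, u ∈ L → v ∈ L → u + v = y → f u v = 0 →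
      u = 0 ∨ v = 0 := by intro y hy; rw [hWdef] at hy; exact hy.2.2
  have hWin : ∀ y, y ∈ L → y ≠ 0 →
      (∀ u v : Fin n → B, u ∈ L → v ∈ L → u + v = y → f u v = 0 → u = 0 ∨ v = 0) →
      y ∈ W := by
    intro y h1 h2 h3; rw [hWdef]; exact ⟨h1, h2, h3⟩
  have hD : (0:ℚ) < ((2 * d₀ : ℕ) : ℚ) := by
    have h : (0:ℕ) < 2 * d₀ := by omega
    exact_mod_cast h
  have claim1 : ∀ k : ℕ, ∀ x, x ∈ L → Q x * ((2 * d₀ : ℕ) : ℚ) ≤ (k : ℚ) →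
      x ∈ Submodule.span ℤ W := by
    intro k
    induction k with
    | zero =>
      intro x hxL hxk
      by_cases hx : x = 0
      · rw [hx]; exact Submodule.zero_mem _
      · exfalso
        have h1 : 0 < Q x := hQpos x hx
        rw [Nat.cast_zero] at hxk
        nlinarith [mul_pos h1 hD]
    | succ k ih =>
      intro x hxL hxk
      by_cases hx : x = 0
      · rw [hx]; exact Submodule.zero_mem _
      by_cases hxW : x ∈ W
      · exact Submodule.subset_span hxW
      have hsplit : ∃ u v : Fin n → B,
          u ∈ L ∧ v ∈ L ∧ u + v = x ∧ f u v = 0 ∧ u ≠ 0 ∧ v ≠ 0 := by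
        by_contra hcon
        push_neg at hcon
        apply hxW
        apply hWin x hxL hx
        intro u v huL hvL huv hfuv
        by_cases hu : u = 0
        · exact Or.inl hu
        · exact Or.inr (hcon u v huL hvL huv hfuv hu)
      obtain ⟨u, v, huL, hvL, huv, hfuv, hu0, hv0⟩ := hsplit
      have hQx : Q x = Q u + Q v := by rw [← huv]; exact hQadd u v hfuv
      obtain ⟨mu, hmu⟩ := hQint u huL
      obtain ⟨mv, hmv⟩ := hQint v hvL
      have hmu1 : (1:ℚ) ≤ Q u * ((2 * d₀ : ℕ) : ℚ) := by
        have h1 : (0:ℚ) < (mu:ℚ) := by rw [← hmu]; exact mul_pos (hQpos u hu0) hD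
        have h2 : (1:ℤ) ≤ mu := by exact_mod_cast h1
        rw [hmu]; exact_mod_cast h2
      have hmv1 : (1:ℚ) ≤ Q v * ((2 * d₀ : ℕ) : ℚ) := by
        have h1 : (0:ℚ) < (mv:ℚ) := by rw [← hmv]; exact mul_pos (hQpos v hv0) hD
        have h2 : (1:ℤ) ≤ mv := by exact_mod_cast h1
        rw [hmv]; exact_mod_cast h2
      have hsum : Q x * ((2 * d₀ : ℕ) : ℚ)
          = Q u * ((2 * d₀ : ℕ) : ℚ) + Q v * ((2 * d₀ : ℕ) : ℚ) := by
        rw [hQx]; ring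
      have hxk' : Q x * ((2 * d₀ : ℕ) : ℚ) ≤ (k : ℚ) + 1 := by
        rw [Nat.cast_succ] at hxk; exact hxk
      have hbu : Q u * ((2 * d₀ : ℕ) : ℚ) ≤ (k : ℚ) := by linarith
      have hbv : Q v * ((2 * d₀ : ℕ) : ℚ) ≤ (k : ℚ) := by linarith
      rw [← huv]
      exact Submodule.add_mem _ (ih u huL hbu) (ih v hvL hbv)
  have hLsub : ∀ x, x ∈ L → x ∈ Submodule.span ℤ W := by
    intro x hxL
    obtain ⟨m, hm⟩ := hQint x hxL
    apply claim1 m.toNat x hxL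
    rw [hm]
    exact_mod_cast Int.self_le_toNat m
  -- ## connectivity
  set Conn : (Fin n → B) → (Fin n → B) → Prop :=
    Relation.ReflTransGen (fun u v => u ∈ W ∧ v ∈ W ∧ f u v ≠ 0) with hConndef
  have hConnrefl : ∀ t, Conn t t := by
    intro t; rw [hConndef]
  have hConnstep : ∀ u v, u ∈ W → v ∈ W → f u v ≠ 0 → Conn u v := by
    intro u v hu hv hne; rw [hConndef]; exact Relation.ReflTransGen.single ⟨hu, hv, hne⟩
  have hConntrans : ∀ {a b c'}, Conn a b → Conn b c' → Conn a c' := by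
    intro a b c' h1 h2; rw [hConndef] at h1 h2 ⊢; exact h1.trans h2
  have hConnsymm : ∀ {a b}, Conn a b → Conn b a := by
    intro a b h; rw [hConndef] at h ⊢
    exact (@Relation.ReflTransGen.stdSymm _ _
      ⟨fun u v huv => ⟨huv.2.1, huv.1, fun h0 => huv.2.2 (horthsymm v u h0)⟩⟩).symm _ _ h
  set C : (Fin n → B) → Submodule ℤ (Fin n → B) :=
    fun t => Submodule.span ℤ {y | y ∈ W ∧ Conn t y} with hCdef
  have hCspan : ∀ t, C t = Submodule.span ℤ {y | y ∈ W ∧ Conn t y} := by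
    intro t; rw [hCdef]
  have hCle : ∀ t, C t ≤ L := by
    intro t; rw [hCspan]; exact Submodule.span_le.mpr (fun y hy => hWL y hy.1)
  have hCmem : ∀ t, ∀ y ∈ W, Conn t y → y ∈ C t := by
    intro t y hy hc; rw [hCspan]; exact Submodule.subset_span ⟨hy, hc⟩
  have hCself : ∀ t ∈ W, t ∈ C t := fun t ht => hCmem t t ht (hConnrefl t)
  have hCeq : ∀ t t', Conn t t' → C t = C t' := by
    intro t t' h
    rw [hCspan, hCspan]
    congr 1
    ext y
    exact ⟨fun hy => ⟨hy.1, hConntrans (hConnsymm h) hy.2⟩,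
           fun hy => ⟨hy.1, hConntrans h hy.2⟩⟩
  have horthC : ∀ t t', ¬ Conn t t' → ∀ x ∈ C t, ∀ y ∈ C t', f x y = 0 := by
    intro t t' hnc x hx
    have inner : ∀ x₀, x₀ ∈ W → Conn t x₀ → ∀ y ∈ C t', f x₀ y = 0 := by
      intro x₀ hx₀W hx₀c y hy
      rw [hCspan] at hy
      refine Submodule.span_induction (p := fun y _ => f x₀ y = 0) ?_ ?_ ?_ ?_ hy
      · intro y₀ hy₀
        by_contra hne
        exact hnc (hConntrans hx₀c
          (hConntrans (hConnstep x₀ y₀ hx₀W hy₀.1 hne) (hConnsymm hy₀.2)))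
      · exact hf02 x₀
      · intro u v _ _ hu hv; rw [hf_add2, hu, hv, add_zero]
      · intro m u _ hu; rw [hfz2, hu, smul_zero]
    rw [hCspan] at hx
    refine Submodule.span_induction (p := fun x _ => ∀ y ∈ C t', f x y = 0) ?_ ?_ ?_ ?_ hx
    · intro x₀ hx₀ y hy; exact inner x₀ hx₀.1 hx₀.2 y hy
    · intro y hy; exact hf01 y
    · intro u v _ _ hu hv y hy; rw [hf_add, hu y hy, hv y hy, add_zero]
    · intro m u _ hu y hy; rw [hfz1, hu y hy, smul_zero]
  -- ## a finite generating set of indecomposable vectors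
  have hgdec : ∀ g : Fin n → B, g ∈ L → ∃ T' : Finset (Fin n → B),
      ↑T' ⊆ W ∧ g ∈ Submodule.span ℤ (↑T' : Set (Fin n → B)) := by
    intro g hg
    exact Submodule.mem_span_finite_of_mem_span (hLsub g hg)
  choose Tg hTg1 hTg2 using hgdec
  have hGL : ∀ g ∈ G, g ∈ L := by
    intro g hg; rw [← hG]; exact Submodule.subset_span hg
  set T : Finset (Fin n → B) := G.attach.biUnion (fun g => Tg g.1 (hGL g.1 g.2)) with hTdef
  have hTW : ∀ t ∈ T, t ∈ W := by
    intro t ht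
    rw [hTdef] at ht
    obtain ⟨g, -, hgt⟩ := Finset.mem_biUnion.mp ht
    exact hTg1 g.1 (hGL g.1 g.2) hgt
  have hLT : Submodule.span ℤ (↑T : Set (Fin n → B)) = L := by
    apply le_antisymm
    · exact Submodule.span_le.mpr (fun t ht => hWL t (hTW t ht))
    · rw [← hG]
      apply Submodule.span_le.mpr
      intro g hg
      have hg' : g ∈ G := hg
      have h1 : g ∈ Submodule.span ℤ (↑(Tg g (hGL g hg')) : Set (Fin n → B)) :=
        hTg2 g (hGL g hg')
      have h2 : (Tg g (hGL g hg')) ⊆ T := by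
        rw [hTdef]
        exact Finset.subset_biUnion_of_mem (fun gg => Tg gg.1 (hGL gg.1 gg.2))
          (Finset.mem_attach G ⟨g, hg'⟩)
      exact Submodule.span_mono (Finset.coe_subset.mpr h2) h1
  have hConnT : ∀ y ∈ W, ∃ t ∈ T, Conn t y := by
    intro y hyW
    by_contra hcon
    push_neg at hcon
    have hfy : ∀ v, v ∈ L → f y v = 0 := by
      intro v hv
      rw [← hLT] at hv
      refine Submodule.span_induction (p := fun v _ => f y v = 0) ?_ ?_ ?_ ?_ hv
      · intro t ht
        by_contra hne
        exact hcon t ht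
          (hConnsymm (hConnstep y t hyW (hTW t ht) hne))
      · exact hf02 y
      · intro u v _ _ hu hv; rw [hf_add2, hu, hv, add_zero]
      · intro m u _ hu; rw [hfz2, hu, smul_zero]
    exact hW0 y hyW (hdef y (hfy y (hWL y hyW)))
  -- ## the canonical decomposition S₀
  set S₀ : Finset (Submodule ℤ (Fin n → B)) := T.image C with hS₀def
  have hS₀mem : ∀ K, K ∈ S₀ ↔ ∃ t ∈ T, C t = K := by
    intro K; rw [hS₀def]; exact Finset.mem_image
  have hCmemS₀ : ∀ t ∈ T, C t ∈ S₀ := by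
    intro t ht; rw [hS₀def]; exact Finset.mem_image_of_mem C ht
  have hS₀le : ∀ K ∈ S₀, K ≤ L := by
    intro K hK; obtain ⟨t, -, rfl⟩ := (hS₀mem K).mp hK; exact hCle t
  have hS₀ne : ∀ K ∈ S₀, K ≠ ⊥ := by
    intro K hK hbot
    obtain ⟨t, ht, rfl⟩ := (hS₀mem _).mp hK
    have h1 : t ∈ C t := hCself t (hTW t ht)
    rw [hbot, Submodule.mem_bot] at h1
    exact hW0 t (hTW t ht) h1
  have hS₀orth : ∀ M ∈ S₀, ∀ N ∈ S₀, M ≠ N → ∀ x ∈ M, ∀ y ∈ N, f x y = 0 := by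
    intro M hM N hN hMN
    obtain ⟨t, ht, rfl⟩ := (hS₀mem _).mp hM
    obtain ⟨t', ht', rfl⟩ := (hS₀mem _).mp hN
    exact horthC t t' (fun h => hMN (hCeq t t' h))
  have hS₀sup : S₀.sup id = L := by
    apply le_antisymm
    · exact Finset.sup_le (fun K hK => hS₀le K hK)
    · rw [← hLT]
      apply Submodule.span_le.mpr
      intro t ht
      have htT : t ∈ T := ht
      exact Finset.le_sup (f := id) (hCmemS₀ t htT) (hCself t (hTW t htT))
  -- ## sum decomposition machinery
  have hmemSup : ∀ (𝒮 : Finset (Submodule ℤ (Fin n → B))), ∀ x, x ∈ 𝒮.sup id →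
      ∃ g : Submodule ℤ (Fin n → B) → (Fin n → B),
        (∀ M, g M ∈ M) ∧ x = ∑ M ∈ 𝒮, g M := by
    intro 𝒮
    induction 𝒮 using Finset.induction_on with
    | empty =>
      intro x hx
      rw [Finset.sup_empty, Submodule.mem_bot] at hx
      exact ⟨fun _ => 0, fun M => Submodule.zero_mem M, by rw [hx, Finset.sum_empty]⟩
    | @insert M₀ 𝒮' hM₀ ih =>
      intro x hx
      rw [Finset.sup_insert] at hx
      obtain ⟨a, ha, b, hb, hab⟩ := Submodule.mem_sup.mp hx
      obtain ⟨g', hg'mem, hg'sum⟩ := ih b hb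
      refine ⟨fun M => if M = M₀ then a else g' M, ?_, ?_⟩
      · intro M
        by_cases h : M = M₀
        · simpa [h] using ha
        · simpa [h] using hg'mem M
      · rw [Finset.sum_insert hM₀, if_pos rfl]
        have he : ∑ M ∈ 𝒮', (if M = M₀ then a else g' M) = ∑ M ∈ 𝒮', g' M :=
          Finset.sum_congr rfl (fun M hM => if_neg (ne_of_mem_of_not_mem hM hM₀))
        rw [he, ← hg'sum]
        exact hab.symm
  have hmemFinsetSup : ∀ (𝒮 : Finset (Submodule ℤ (Fin n → B))) (K : Submodule ℤ (Fin n → B)),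
      K ∈ 𝒮 → ∀ x ∈ K, x ∈ 𝒮.sup id := by
    intro 𝒮 K hK x hx
    exact Finset.le_sup (f := id) hK hx
  have hsumorth : ∀ (𝒮 : Finset (Submodule ℤ (Fin n → B))),
      (∀ M ∈ 𝒮, ∀ N ∈ 𝒮, M ≠ N → ∀ x ∈ M, ∀ y ∈ N, f x y = 0) →
      ∀ g : Submodule ℤ (Fin n → B) → (Fin n → B), (∀ M, g M ∈ M) →
      ∀ x, x = ∑ M ∈ 𝒮, g M → ∀ M ∈ 𝒮, f (g M) x = f (g M) (g M) := by
    intro 𝒮 horth g hg x hxsum M hM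
    rw [hxsum, hfsum2]
    exact Finset.sum_eq_single_of_mem M hM
      (fun N hN hne => horth M hM N hN (Ne.symm hne) (g M) (hg M) (g N) (hg N))
  have hcompzero : ∀ (𝒮 : Finset (Submodule ℤ (Fin n → B))),
      (∀ M ∈ 𝒮, ∀ N ∈ 𝒮, M ≠ N → ∀ x ∈ M, ∀ y ∈ N, f x y = 0) →
      ∀ g : Submodule ℤ (Fin n → B) → (Fin n → B), (∀ M, g M ∈ M) →
      ∀ x, x = ∑ M ∈ 𝒮, g M → ∀ M ∈ 𝒮, f x (g M) = 0 → g M = 0 := by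
    intro 𝒮 horth g hg x hxsum M hM hfx
    apply hdef
    rw [← hsumorth 𝒮 horth g hg x hxsum M hM]
    exact horthsymm x (g M) hfx
  have hWmemgen : ∀ (𝒮 : Finset (Submodule ℤ (Fin n → B))),
      (∀ M ∈ 𝒮, ∀ N ∈ 𝒮, M ≠ N → ∀ x ∈ M, ∀ y ∈ N, f x y = 0) →
      (∀ M ∈ 𝒮, M ≤ L) →
      ∀ w, w ∈ W → w ∈ 𝒮.sup id → ∃ M ∈ 𝒮, w ∈ M := by
    intro 𝒮
    induction 𝒮 using Finset.induction_on with
    | empty =>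
      intro _ _ w hwW hw
      rw [Finset.sup_empty, Submodule.mem_bot] at hw
      exact absurd hw (hW0 w hwW)
    | @insert M₀ 𝒮' hM₀ ih =>
      intro horth hle w hwW hw
      rw [Finset.sup_insert] at hw
      obtain ⟨a, ha, b, hb, hab⟩ := Submodule.mem_sup.mp hw
      obtain ⟨g, hgmem, hgsum⟩ := hmemSup 𝒮' b hb
      have hfab : f a b = 0 := by
        rw [hgsum, hfsum2]
        apply Finset.sum_eq_zero
        intro N hN
        exact horth M₀ (Finset.mem_insert_self M₀ 𝒮') N (Finset.mem_insert_of_mem hN)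
          (fun h => hM₀ (h ▸ hN)) a ha (g N) (hgmem N)
      have haL : a ∈ L := hle M₀ (Finset.mem_insert_self M₀ 𝒮') ha
      have hbL : b ∈ L := by
        rw [hgsum]
        exact Submodule.sum_mem L
          (fun N hN => hle N (Finset.mem_insert_of_mem hN) (hgmem N))
      obtain h | h := hWind w hwW a b haL hbL hab hfab
      · have hwb : w ∈ 𝒮'.sup id := by rw [← hab, h, zero_add]; exact hb
        obtain ⟨M, hM, hwM⟩ := ih
          (fun M hM N hN => horth M (Finset.mem_insert_of_mem hM) N
            (Finset.mem_insert_of_mem hN))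
          (fun M hM => hle M (Finset.mem_insert_of_mem hM)) w hwW hwb
        exact ⟨M, Finset.mem_insert_of_mem hM, hwM⟩
      · refine ⟨M₀, Finset.mem_insert_self M₀ 𝒮', ?_⟩
        rw [← hab, h, add_zero]; exact ha
  -- ## O-stability of the canonical pieces
  have hS₀stab : ∀ K ∈ S₀, ∀ a ∈ O, ∀ x ∈ K, a • x ∈ K := by
    intro K hK a ha
    obtain ⟨t, htT, rfl⟩ := (hS₀mem K).mp hK
    have hcls : ∀ y, y ∈ W → Conn t y → a • y ∈ C t := by
      intro y hyW hconn
      have hay : a • y ∈ L := hLO a ha y (hWL y hyW)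
      have haysup : a • y ∈ S₀.sup id := by rw [hS₀sup]; exact hay
      obtain ⟨g, hgmem, hgsum⟩ := hmemSup S₀ (a • y) haysup
      have hgz : ∀ K' ∈ S₀, K' ≠ C t → g K' = 0 := by
        intro K' hK' hne
        apply hcompzero S₀ hS₀orth g hgmem (a • y) hgsum K' hK'
        have hyz : f y (g K') = 0 := hS₀orth (C t) (hCmemS₀ t htT) K' hK'
          (Ne.symm hne) y (hCmem t y hyW hconn) (g K') (hgmem K')
        rw [hf_smul, hyz, mul_zero]
      have hay2 : a • y = g (C t) := by
        rw [hgsum]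
        exact Finset.sum_eq_single_of_mem (C t) (hCmemS₀ t htT)
          (fun N hN hne => hgz N hN hne)
      rw [hay2]; exact hgmem (C t)
    intro x hx
    rw [hCspan] at hx
    refine Submodule.span_induction (p := fun x _ => a • x ∈ C t) ?_ ?_ ?_ ?_ hx
    · intro y hy; exact hcls y hy.1 hy.2
    · show a • (0 : Fin n → B) ∈ C t
      rw [hsmul0]; exact Submodule.zero_mem _
    · intro u v _ _ hu hv
      show a • (u + v) ∈ C t
      rw [hsmuladd]; exact Submodule.add_mem _ hu hv
    · intro m u _ hu
      show a • (m • u) ∈ C t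
      rw [hsmulcomm a m u]
      exact Submodule.smul_mem _ m hu
  -- ## indecomposability of the canonical pieces
  have hS₀indec : ∀ K ∈ S₀, ∀ M₁ M₂ : Submodule ℤ (Fin n → B),
      (∀ a ∈ O, ∀ x ∈ M₁, a • x ∈ M₁) → (∀ a ∈ O, ∀ x ∈ M₂, a • x ∈ M₂) →
      M₁ ⊔ M₂ = K → (∀ x ∈ M₁, ∀ y ∈ M₂, f x y = 0) → M₁ = ⊥ ∨ M₂ = ⊥ := by
    intro K hK M₁ M₂ _ _ hsup horth
    obtain ⟨t, htT, rfl⟩ := (hS₀mem K).mp hK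
    have htW := hTW t htT
    have hsub1 : M₁ ≤ C t := hsup ▸ le_sup_left
    have hsub2 : M₂ ≤ C t := hsup ▸ le_sup_right
    have hmemor : ∀ y, y ∈ W → Conn t y → y ∈ M₁ ∨ y ∈ M₂ := by
      intro y hyW hconn
      have hyC : y ∈ M₁ ⊔ M₂ := by rw [hsup]; exact hCmem t y hyW hconn
      obtain ⟨u, hu, v, hv, huv⟩ := Submodule.mem_sup.mp hyC
      obtain h | h := hWind y hyW u v ((hCle t) (hsub1 hu)) ((hCle t) (hsub2 hv))
        huv (horth u hu v hv)
      · right; rw [← huv, h, zero_add]; exact hv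
      · left; rw [← huv, h, add_zero]; exact hu
    have hside : ∀ y, Conn t y → y ∈ W →
        ((t ∈ M₁ → y ∈ M₁) ∧ (t ∈ M₂ → y ∈ M₂)) := by
      intro y hconn
      rw [hConndef] at hconn
      induction hconn with
      | refl => exact fun _ => ⟨id, id⟩
      | @tail b y' hab step ih =>
        intro hy'W
        have hconnty : Conn t y' := by
          rw [hConndef]; exact Relation.ReflTransGen.tail hab step
        have hbW := step.1
        have hfby := step.2.2
        obtain ⟨ih1, ih2⟩ := ih hbW
        constructor
        · intro ht1
          obtain hy1 | hy2 := hmemor y' hy'W hconnty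
          · exact hy1
          · exact absurd (horth b (ih1 ht1) y' hy2) hfby
        · intro ht2
          obtain hy1 | hy2 := hmemor y' hy'W hconnty
          · exact absurd (horthsymm y' b (horth y' hy1 b (ih2 ht2))) hfby
          · exact hy2
    obtain ht1 | ht2 := hmemor t htW (hConnrefl t)
    · right
      have hCM1 : C t ≤ M₁ := by
        rw [hCspan]
        apply Submodule.span_le.mpr
        intro y hy
        exact (hside y hy.2 hy.1).1 ht1
      rw [eq_bot_iff]
      intro m hm
      rw [Submodule.mem_bot]
      exact hdef m (horth m (hCM1 (hsub2 hm)) m hm)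
    · left
      have hCM2 : C t ≤ M₂ := by
        rw [hCspan]
        apply Submodule.span_le.mpr
        intro y hy
        exact (hside y hy.2 hy.1).2 ht2
      rw [eq_bot_iff]
      intro m hm
      rw [Submodule.mem_bot]
      exact hdef m (horth m hm m (hCM2 (hsub1 hm)))
  -- ## the existence part
  refine ⟨S₀, ⟨?_, hS₀orth, hS₀sup⟩, ?_⟩
  · intro M hM
    exact ⟨hS₀ne M hM, hS₀le M hM, hS₀stab M hM, hS₀indec M hM⟩
  -- ## uniqueness
  rintro S ⟨hS1, hS2, hS3⟩
  have hmemWS : ∀ w, w ∈ W → ∃ M ∈ S, w ∈ M := by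
    intro w hw
    apply hWmemgen S hS2 (fun M hM => (hS1 M hM).2.1) w hw
    rw [hS3]
    exact hWL w hw
  have hchainS : ∀ M ∈ S, ∀ w, w ∈ M → ∀ z, Conn w z → z ∈ W → z ∈ M := by
    intro M hM w hw z hconn
    rw [hConndef] at hconn
    induction hconn with
    | refl => exact fun _ => hw
    | @tail b z' hab step ih =>
      intro hz'W
      obtain ⟨hbW, -, hfbz⟩ := step
      have hbM : b ∈ M := ih hbW
      obtain ⟨N, hN, hzN⟩ := hmemWS z' hz'W
      by_cases hNM : N = M
      · rw [hNM] at hzN; exact hzN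
      · exact absurd (hS2 M hM N hN (fun h => hNM h.symm) b hbM z' hzN) hfbz
  have hKle : ∀ K ∈ S₀, ∃ M, M ∈ S ∧ K ≤ M := by
    intro K hK
    obtain ⟨t, htT, rfl⟩ := (hS₀mem K).mp hK
    obtain ⟨M, hM, htM⟩ := hmemWS t (hTW t htT)
    refine ⟨M, hM, ?_⟩
    rw [hCspan]
    apply Submodule.span_le.mpr
    intro y hy
    exact hchainS M hM t htM y hy.2 hy.1
  have hfilter : ∀ M ∈ S, M = (S₀.filter (fun K => K ≤ M)).sup id := by
    intro M hM
    apply le_antisymm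
    · intro m hm
      have hmL : m ∈ L := (hS1 M hM).2.1 hm
      have hmsup : m ∈ S₀.sup id := by rw [hS₀sup]; exact hmL
      obtain ⟨g, hgmem, hgsum⟩ := hmemSup S₀ m hmsup
      have hzero : ∀ K ∈ S₀, ¬ (K ≤ M) → g K = 0 := by
        intro K hK hKM
        obtain ⟨N, hN, hKN⟩ := hKle K hK
        have hNM : N ≠ M := fun h => hKM (h ▸ hKN)
        apply hcompzero S₀ hS₀orth g hgmem m hgsum K hK
        exact hS2 M hM N hN (Ne.symm hNM) m hm (g K) (hKN (hgmem K))
      have hmfil : m = ∑ K ∈ S₀.filter (fun K => K ≤ M), g K := by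
        rw [hgsum]
        exact (Finset.sum_filter_of_ne
          (fun K hK hne => Classical.byContradiction
            (fun h => hne (hzero K hK h)))).symm
      rw [hmfil]
      exact Submodule.sum_mem _
        (fun K hK => hmemFinsetSup _ K hK _ (hgmem K))
    · exact Finset.sup_le (fun K hK => (Finset.mem_filter.mp hK).2)
  have hsingleton : ∀ M ∈ S, ∀ K₁ ∈ S₀, K₁ ≤ M → ∀ K₂ ∈ S₀, K₂ ≤ M → K₁ = K₂ := by
    intro M hM K₁ hK₁ hK₁M K₂ hK₂ hK₂M
    by_contra hne
    have hK₁f : K₁ ∈ S₀.filter (fun K => K ≤ M) := Finset.mem_filter.mpr ⟨hK₁, hK₁M⟩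
    have hsupM : K₁ ⊔ ((S₀.filter (fun K => K ≤ M)).erase K₁).sup id = M := by
      have e1 := Finset.insert_erase hK₁f
      calc K₁ ⊔ ((S₀.filter (fun K => K ≤ M)).erase K₁).sup id
          = (insert K₁ ((S₀.filter (fun K => K ≤ M)).erase K₁)).sup id :=
            (Finset.sup_insert (b := K₁)
              (s := (S₀.filter (fun K => K ≤ M)).erase K₁) (f := id)).symm
        _ = (S₀.filter (fun K => K ≤ M)).sup id := by rw [e1]
        _ = M := (hfilter M hM).symm
    have hsubS₀ : ∀ K ∈ (S₀.filter (fun K => K ≤ M)).erase K₁, K ∈ S₀ :=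
      fun K hK => (Finset.mem_filter.mp (Finset.mem_of_mem_erase hK)).1
    have hstabR : ∀ a ∈ O, ∀ x ∈ ((S₀.filter (fun K => K ≤ M)).erase K₁).sup id,
        a • x ∈ ((S₀.filter (fun K => K ≤ M)).erase K₁).sup id := by
      intro a ha x hx
      obtain ⟨g, hgmem, hgsum⟩ := hmemSup _ x hx
      rw [hgsum, hsmulsum]
      exact Submodule.sum_mem _
        (fun K hK => hmemFinsetSup _ K hK _
          (hS₀stab K (hsubS₀ K hK) a ha (g K) (hgmem K)))
    have horth1R : ∀ x ∈ K₁, ∀ y ∈ ((S₀.filter (fun K => K ≤ M)).erase K₁).sup id,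
        f x y = 0 := by
      intro x hx y hy
      obtain ⟨g, hgmem, hgsum⟩ := hmemSup _ y hy
      rw [hgsum, hfsum2]
      apply Finset.sum_eq_zero
      intro K hK
      exact hS₀orth K₁ hK₁ K (hsubS₀ K hK)
        (fun h => (Finset.mem_erase.mp hK).1 h.symm) x hx (g K) (hgmem K)
    obtain h | h := (hS1 M hM).2.2.2 K₁ (((S₀.filter (fun K => K ≤ M)).erase K₁).sup id)
      (hS₀stab K₁ hK₁) hstabR hsupM horth1R
    · exact hS₀ne K₁ hK₁ h
    · have hK₂f : K₂ ∈ (S₀.filter (fun K => K ≤ M)).erase K₁ :=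
        Finset.mem_erase.mpr ⟨Ne.symm hne, Finset.mem_filter.mpr ⟨hK₂, hK₂M⟩⟩
      have hle2 : K₂ ≤ ⊥ := by
        rw [← h]
        exact Finset.le_sup (f := id) hK₂f
      exact hS₀ne K₂ hK₂ (le_bot_iff.mp hle2)
  have hSsub : ∀ M ∈ S, M ∈ S₀ := by
    intro M hM
    have hMfil := hfilter M hM
    have hne : (S₀.filter (fun K => K ≤ M)).Nonempty := by
      by_contra h
      rw [Finset.not_nonempty_iff_eq_empty] at h
      rw [h, Finset.sup_empty] at hMfil
      exact (hS1 M hM).1 hMfil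
    obtain ⟨K, hK⟩ := hne
    have hall : ∀ K' ∈ S₀.filter (fun K => K ≤ M), K' = K :=
      fun K' hK' => hsingleton M hM K' (Finset.mem_filter.mp hK').1
        (Finset.mem_filter.mp hK').2 K (Finset.mem_filter.mp hK).1
        (Finset.mem_filter.mp hK).2
    have hsing : S₀.filter (fun K => K ≤ M) = {K} :=
      Finset.eq_singleton_iff_unique_mem.mpr ⟨hK, hall⟩
    rw [hsing, Finset.sup_singleton] at hMfil
    rw [hMfil]
    exact (Finset.mem_filter.mp hK).1
  have hS₀sub : ∀ K ∈ S₀, K ∈ S := by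
    intro K hK
    obtain ⟨N, hN, hKN⟩ := hKle K hK
    have hNfil := hfilter N hN
    have hKf : K ∈ S₀.filter (fun K' => K' ≤ N) := Finset.mem_filter.mpr ⟨hK, hKN⟩
    have hall : ∀ K' ∈ S₀.filter (fun K' => K' ≤ N), K' = K :=
      fun K' hK' => hsingleton N hN K' (Finset.mem_filter.mp hK').1
        (Finset.mem_filter.mp hK').2 K (Finset.mem_filter.mp hKf).1
        (Finset.mem_filter.mp hKf).2
    have hsing : S₀.filter (fun K' => K' ≤ N) = {K} :=
      Finset.eq_singleton_iff_unique_mem.mpr ⟨hKf, hall⟩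
    rw [hsing, Finset.sup_singleton] at hNfil
    have hNK : N = K := hNfil
    rw [hNK] at hN
    exact hN
  exact Finset.Subset.antisymm (fun M hM => hSsub M hM) (fun K hK => hS₀sub K hK)
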